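/- Let G be a finite p-group of conjugate type {1, pⁿ}. Then every generating set of G has at least n elements; equivalently, the minimal number of generators of G is at least n. -/

import Mathlib

/-- The conjugacy class of `x` in a group. -/
def conjClass {G : Type*} [Group G] (x : G) : Set G := {y | ∃ g : G, g⁻¹ * x * g = y}

/-- `G` is of conjugate type `{1, m}`: every conjugacy class has size `1` or `m`,
and some class has size `m`. -/
def IsConjugateType (G : Type*) [Group G] (m : ℕ) : Prop :=
  (∀ x : G, Nat.card (conjClass x) = 1 ∨ Nat.card (conjClass x) = m) ∧
  (∃ x : G, Nat.card (conjClass x) = m)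

/-- `G` is a Camina group: the class of every `x ∉ G'` is the coset `xG'`. -/
def IsCamina (G : Type*) [Group G] : Prop :=
  ∀ x : G, x ∉ commutator G → conjClass x = (fun c => x * c) '' (commutator G : Set G)

open scoped commutatorElement in
/-- Two groups are isoclinic. -/
def Isoclinic (G H : Type*) [Group G] [Group H] : Prop :=
  ∃ (φ : (G ⧸ Subgroup.center G) ≃* (H ⧸ Subgroup.center H))
    (θ : (commutator G) ≃* (commutator H)),
    ∀ (x y : G) (x' y' : H),
      φ (QuotientGroup.mk x) = QuotientGroup.mk x' →
      φ (QuotientGroup.mk y) = QuotientGroup.mk y' →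
      (θ ⟨⁅x, y⁆, Subgroup.commutator_mem_commutator (Subgroup.mem_top x) (Subgroup.mem_top y)⟩ : H) = ⁅x', y'⁆

open Subgroup

lemma card_sup_le' {A : Type*} [CommGroup A] [Finite A] (H K : Subgroup A) :
    Nat.card ↥(H ⊔ K) ≤ Nat.card H * Nat.card K := by
  have hsurj : Function.Surjective (fun y : ↥H × ↥K =>
      (⟨(y.1 : A) * y.2, mul_mem (mem_sup_left y.1.2) (mem_sup_right y.2.2)⟩ : ↥(H ⊔ K))) := by
    rintro ⟨z, hz⟩
    rw [Subgroup.mem_sup] at hz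
    obtain ⟨y, hy, w, hw, e⟩ := hz
    exact ⟨(⟨y, hy⟩, ⟨w, hw⟩), Subtype.ext e⟩
  calc Nat.card ↥(H ⊔ K) ≤ Nat.card (↥H × ↥K) := Nat.card_le_card_of_surjective _ hsurj
    _ = Nat.card H * Nat.card K := Nat.card_prod _ _

lemma card_closure_le' {A : Type*} [CommGroup A] [Finite A] {p : ℕ} (hp : 0 < p)
    (T : Finset A) (hT : ∀ a ∈ T, a ^ p = 1) :
    Nat.card ↥(Subgroup.closure (T : Set A)) ≤ p ^ T.card := by
  classical
  induction T using Finset.induction_on with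
  | empty => simp [Subgroup.closure_empty]
  | @insert a T haT ih =>
    rw [Finset.coe_insert, Set.insert_eq, Subgroup.closure_union,
      Finset.card_insert_of_notMem haT, pow_succ']
    have h1 : Nat.card ↥(Subgroup.closure ({a} : Set A)) ≤ p := by
      rw [← Subgroup.zpowers_eq_closure, Nat.card_zpowers]
      exact Nat.le_of_dvd hp (orderOf_dvd_of_pow_eq_one (hT a (T.mem_insert_self a)))
    exact le_trans (card_sup_le' _ _)
      (Nat.mul_le_mul h1 (ih fun b hb => hT b (Finset.mem_insert_of_mem hb)))

/-- A finite p-group of conjugate type {1, pⁿ} needs at least n generators. -/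
theorem generators_lower_bound {p n : ℕ} [Fact p.Prime] (hn : 1 ≤ n)
    {G : Type*} [Group G] [Finite G] (hG : IsPGroup p G)
    (ht : IsConjugateType G (p ^ n)) :
    ∀ S : Finset G, Subgroup.closure (S : Set G) = ⊤ → n ≤ S.card := by
  intro S hS
  classical
  have hp : p.Prime := Fact.out
  have hpn1 : 1 < p ^ n := Nat.one_lt_pow (by omega) hp.one_lt
  -- G is nonabelian
  have hnab : ∃ y : G, y ∉ center G := by
    by_contra h
    push_neg at h
    obtain ⟨x₀, hx₀⟩ := ht.2
    have : conjClass x₀ = {x₀} := by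
      ext y
      constructor
      · rintro ⟨g, rfl⟩
        have := Subgroup.mem_center_iff.mp (h x₀) g
        simp only [Set.mem_singleton_iff]
        rw [mul_assoc, ← this]; group
      · rintro rfl; exact ⟨1, by group⟩
    rw [this] at hx₀
    simp at hx₀
    omega
  obtain ⟨y₀, hy₀⟩ := hnab
  set Q := G ⧸ center G with hQ
  have hQnt : Nontrivial Q := by
    refine nontrivial_of_ne ((y₀ : G) : Q) 1 fun h => hy₀ ?_
    exact (QuotientGroup.eq_one_iff y₀).mp h
  have hQp : IsPGroup p Q := hG.to_quotient _
  have hZQnt : Nontrivial ↥(center Q) := hQp.center_nontrivial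
  have hZQp : IsPGroup p ↥(center Q) := hQp.to_subgroup _
  obtain ⟨k, hk0, hk⟩ := hZQp.nontrivial_iff_card.mp hZQnt
  letI : Fintype ↥(center Q) := Fintype.ofFinite _
  obtain ⟨a, ha⟩ : ∃ a : ↥(center Q), orderOf a = p := by
    refine exists_prime_orderOf_dvd_card p ?_
    rw [← Nat.card_eq_fintype_card, hk]
    exact dvd_pow_self p (by omega)
  obtain ⟨x, hx⟩ := QuotientGroup.mk_surjective (a : Q)
  have hq1 : ((a : Q)) ≠ 1 := by
    intro h
    rw [← orderOf_coe, h, orderOf_one] at ha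
    exact hp.one_lt.ne' (ha ▸ rfl)
  have hxZ : x ∉ center G := fun h => hq1 (hx ▸ (QuotientGroup.eq_one_iff x).mpr h)
  have hxp : x ^ p ∈ center G := by
    rw [← QuotientGroup.eq_one_iff]
    have e : ((x ^ p : G) : Q) = (a : Q) ^ p := by rw [← hx]; rfl
    have hap : a ^ p = 1 := ha ▸ pow_orderOf_eq_one a
    rw [e, ← Subgroup.coe_pow, hap, Subgroup.coe_one]
  have hacent := Subgroup.mem_center_iff.mp a.2
  -- the commutator map into the center
  have hcom : ∀ g : G, x⁻¹ * g⁻¹ * x * g ∈ center G := by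
    intro g
    rw [← QuotientGroup.eq_one_iff]
    have e : ((x⁻¹ * g⁻¹ * x * g : G) : Q)
        = ((x : Q))⁻¹ * ((g : G) : Q)⁻¹ * ((x : Q)) * ((g : G) : Q) := rfl
    rw [e, hx, mul_assoc ((a : Q))⁻¹, hacent]
    group
  let ψ : G →* ↥(center G) :=
  { toFun := fun g => ⟨x⁻¹ * g⁻¹ * x * g, hcom g⟩
    map_one' := by
      apply Subtype.ext
      show x⁻¹ * 1⁻¹ * x * 1 = 1
      group
    map_mul' := fun g h => by
      apply Subtype.ext
      show x⁻¹ * (g * h)⁻¹ * x * (g * h) = (x⁻¹ * g⁻¹ * x * g) * (x⁻¹ * h⁻¹ * x * h)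
      have Hg : ∀ b : G, b * (x⁻¹ * g⁻¹ * x * g) = (x⁻¹ * g⁻¹ * x * g) * b :=
        Subgroup.mem_center_iff.mp (hcom g)
      have e : x⁻¹ * (g * h)⁻¹ * x * (g * h)
          = (x⁻¹ * h⁻¹ * x * h) * (h⁻¹ * (x⁻¹ * g⁻¹ * x * g) * h) := by group
      rw [e, Hg h⁻¹, inv_mul_cancel_right]
      exact Hg _ }
  have hψp : ∀ g : G, ψ g ^ p = 1 := by
    intro g
    apply Subtype.ext
    show ((ψ g : ↥(center G)) : G) ^ p = 1
    show (x⁻¹ * g⁻¹ * x * g) ^ p = 1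
    set c := x⁻¹ * g⁻¹ * x * g with hc
    have Hg : ∀ b : G, b * c = c * b := Subgroup.mem_center_iff.mp (hcom g)
    have hcj : g⁻¹ * x * g = x * c := by rw [hc]; group
    have h2 : g⁻¹ * x ^ p * g = (g⁻¹ * x * g) ^ p := by
      have := map_pow (MulAut.conj g⁻¹) x p
      simpa [MulAut.conj_apply] using this
    have h3 : g⁻¹ * x ^ p * g = x ^ p := by
      have := Subgroup.mem_center_iff.mp hxp g⁻¹
      rw [this, inv_mul_cancel_right]
    have hxc : Commute x c := Hg x
    have h4 : (x * c) ^ p = x ^ p * c ^ p := hxc.mul_pow p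
    have h5 : x ^ p = x ^ p * c ^ p := by rw [← h4, ← hcj, ← h2, h3]
    have h6 : x ^ p * 1 = x ^ p * c ^ p := by rw [mul_one]; exact h5
    exact (mul_left_cancel h6).symm
  -- the class of x has cardinality pⁿ
  have hclass : Nat.card (conjClass x) = p ^ n := by
    rcases ht.1 x with h | h
    · exfalso
      have hsub := (Nat.card_eq_one_iff_unique.mp h).1
      obtain ⟨g, hg⟩ : ∃ g : G, ¬g * x = x * g := by
        by_contra hcon; push_neg at hcon
        exact hxZ (Subgroup.mem_center_iff.mpr hcon)
      have m1 : x ∈ conjClass x := ⟨1, by group⟩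
      have m2 : g⁻¹ * x * g ∈ conjClass x := ⟨g, rfl⟩
      have e2 : g⁻¹ * x * g = x :=
        congrArg Subtype.val (Subsingleton.elim (α := conjClass x) ⟨_, m2⟩ ⟨x, m1⟩)
      have e3 : x * g = g * x := by
        have := congrArg (fun z => g * z) e2
        simpa [mul_assoc] using this
      exact hg e3.symm
    · exact h
  -- the range of ψ has cardinality pⁿ
  have hrange : Nat.card ↥ψ.range = p ^ n := by
    rw [← hclass]
    have hset : conjClass x
        = (fun c : G => x * c) '' (Subtype.val '' ((ψ.range : Subgroup ↥(center G)) : Set ↥(center G))) := by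
      ext z
      constructor
      · rintro ⟨g, rfl⟩
        refine ⟨(ψ g : G), ⟨ψ g, ⟨g, rfl⟩, rfl⟩, ?_⟩
        show x * (x⁻¹ * g⁻¹ * x * g) = g⁻¹ * x * g
        group
      · rintro ⟨c, ⟨u, hu, rfl⟩, rfl⟩
        obtain ⟨g, rfl⟩ := hu
        refine ⟨g, ?_⟩
        show g⁻¹ * x * g = x * (x⁻¹ * g⁻¹ * x * g)
        group
    rw [hset, Nat.card_image_of_injective (mul_right_injective x),
      Nat.card_image_of_injective Subtype.val_injective]
    rfl
  -- conclude
  have hTsub : ∀ b ∈ S.image ψ, b ^ p = 1 := by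
    intro b hb
    obtain ⟨g, -, rfl⟩ := Finset.mem_image.mp hb
    exact hψp g
  have hTgen : Subgroup.closure ((S.image ψ : Finset ↥(center G)) : Set ↥(center G)) = ψ.range := by
    rw [Finset.coe_image, ← MonoidHom.map_closure, hS]
    exact (MonoidHom.range_eq_map ψ).symm
  letI : CommGroup ↥(center G) :=
    { (center G).toGroup with mul_comm := fun a b => Subtype.ext (Subgroup.mem_center_iff.mp b.2 a) }
  have hle := card_closure_le' hp.pos (S.image ψ) hTsub
  rw [hTgen, hrange] at hle
  have hle2 : p ^ n ≤ p ^ S.card :=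
    le_trans hle (Nat.pow_le_pow_right hp.pos (Finset.card_image_le))
  exact (Nat.pow_le_pow_iff_right hp.one_lt).mp hle2
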